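/- For all integers m ≥ 1 and t ≥ 1, every vertex of K_{m,t-1} has degree in K_{m,t} equal to (m+1) times its degree in K_{m,t-1}. -/

import Mathlib

/-- The triangles of the Koch network `K_{m,t}`: at step `t+1`, each old triangle survives and
each (triangle, corner, group) creates a new triangle. -/
def KochTri (m : ℕ) : ℕ → Type
  | 0 => Unit
  | t+1 => KochTri m t ⊕ (KochTri m t × Fin 3 × Fin m)

/-- The vertices of the Koch network `K_{m,t}`: at step `t+1`, each (triangle, corner, group)
creates two new vertices. -/
def KochVertex (m : ℕ) : ℕ → Type
  | 0 => Fin 3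
  | t+1 => KochVertex m t ⊕ (KochTri m t × Fin 3 × Fin m × Fin 2)

/-- The three corner vertices of each triangle. -/
def KochCorner (m : ℕ) : ∀ t, KochTri m t → Fin 3 → KochVertex m t
  | 0, _, i => i
  | t+1, Sum.inl τ, i => Sum.inl (KochCorner m t τ i)
  | t+1, Sum.inr (τ, c, g), i =>
      ![Sum.inl (KochCorner m t τ c), Sum.inr (τ, c, g, 0), Sum.inr (τ, c, g, 1)] i

instance KochTri.instDecidableEq (m : ℕ) : ∀ t, DecidableEq (KochTri m t)
  | 0 => inferInstanceAs (DecidableEq Unit)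
  | t+1 =>
    letI := KochTri.instDecidableEq m t
    inferInstanceAs (DecidableEq (KochTri m t ⊕ (KochTri m t × Fin 3 × Fin m)))

instance KochVertex.instDecidableEq (m : ℕ) : ∀ t, DecidableEq (KochVertex m t)
  | 0 => inferInstanceAs (DecidableEq (Fin 3))
  | t+1 =>
    letI := KochVertex.instDecidableEq m t
    letI := KochTri.instDecidableEq m t
    inferInstanceAs (DecidableEq (KochVertex m t ⊕ (KochTri m t × Fin 3 × Fin m × Fin 2)))

instance KochTri.instFintype (m : ℕ) : ∀ t, Fintype (KochTri m t)
  | 0 => inferInstanceAs (Fintype Unit)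
  | t+1 =>
    letI := KochTri.instFintype m t
    inferInstanceAs (Fintype (KochTri m t ⊕ (KochTri m t × Fin 3 × Fin m)))

instance KochVertex.instFintype (m : ℕ) : ∀ t, Fintype (KochVertex m t)
  | 0 => inferInstanceAs (Fintype (Fin 3))
  | t+1 =>
    letI := KochVertex.instFintype m t
    letI := KochTri.instFintype m t
    inferInstanceAs (Fintype (KochVertex m t ⊕ (KochTri m t × Fin 3 × Fin m × Fin 2)))

/-- The Koch network `K_{m,t}`: two distinct vertices are adjacent iff they are corners of a
common triangle. -/
def KochGraph (m t : ℕ) : SimpleGraph (KochVertex m t) where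
  Adj u v := u ≠ v ∧ ∃ (τ : KochTri m t) (i j : Fin 3),
      KochCorner m t τ i = u ∧ KochCorner m t τ j = v
  symm := ⟨by rintro u v ⟨hne, τ, i, j, hi, hj⟩; exact ⟨hne.symm, τ, j, i, hj, hi⟩⟩
  loopless := ⟨by rintro u ⟨hne, -⟩; exact hne rfl⟩

instance (m t : ℕ) : DecidableRel (KochGraph m t).Adj := fun u v =>
  inferInstanceAs (Decidable (u ≠ v ∧ ∃ (τ : KochTri m t) (i j : Fin 3),
      KochCorner m t τ i = u ∧ KochCorner m t τ j = v))

/-- The step at which a vertex of `K_{m,t}` was added (initial vertices are added at step 0). -/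
def KochBirth (m : ℕ) : ∀ t, KochVertex m t → ℕ
  | 0, _ => 0
  | t+1, Sum.inl v => KochBirth m t v
  | t+1, Sum.inr _ => t+1

/-- The canonical inclusion of `K_{m,t}` into `K_{m,t+1}`. -/
def KochInl (m t : ℕ) (v : KochVertex m t) : KochVertex m (t+1) := Sum.inl v

/-- The other member of the group of two with which a (non-initial) vertex was added. -/
def KochSibling (m : ℕ) : ∀ t, KochVertex m t → KochVertex m t
  | 0, v => v
  | t+1, Sum.inl v => Sum.inl (KochSibling m t v)
  | t+1, Sum.inr (τ, c, g, p) => Sum.inr (τ, c, g, if p = 0 then 1 else 0)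

/-- The father vertex of a (non-initial) vertex: the existing vertex to which its group of two
was attached. -/
def KochFather (m : ℕ) : ∀ t, KochVertex m t → KochVertex m t
  | 0, v => v
  | t+1, Sum.inl v => Sum.inl (KochFather m t v)
  | t+1, Sum.inr (τ, c, _, _) => Sum.inl (KochCorner m t τ c)

instance kochDecEqInl (m t : ℕ) (a : KochVertex m (t+1)) (v : KochVertex m t) :
    Decidable (a = Sum.inl v) := KochVertex.instDecidableEq m (t+1) a (Sum.inl v)

instance kochDecEqInr (m t : ℕ) (a : KochVertex m (t+1))
    (b : KochTri m t × Fin 3 × Fin m × Fin 2) :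
    Decidable (a = Sum.inr b) := KochVertex.instDecidableEq m (t+1) a (Sum.inr b)

instance kochDecEqZero (m : ℕ) (i : Fin 3) (v : KochVertex m 0) :
    Decidable (i = v) := instDecidableEqFin 3 i v

instance kochNbrFintypeInl (m t : ℕ) (v : KochVertex m t) :
    Fintype ((KochGraph m (t+1)).neighborSet (Sum.inl v)) :=
  SimpleGraph.neighborSetFintype (KochGraph m (t+1)) (Sum.inl v)

instance kochNbrFintypeInr (m t : ℕ) (b : KochTri m t × Fin 3 × Fin m × Fin 2) :
    Fintype ((KochGraph m (t+1)).neighborSet (Sum.inr b)) :=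
  SimpleGraph.neighborSetFintype (KochGraph m (t+1)) (Sum.inr b)
instance kochDecEq_ll (m t : ℕ) (x : KochVertex m t) (y : KochVertex m t) :
    Decidable (@Eq (KochVertex m (t+1)) (Sum.inl x) (Sum.inl y)) :=
  KochVertex.instDecidableEq m (t+1) (Sum.inl x) (Sum.inl y)

instance kochDecAdj_ll (m t : ℕ) (x : KochVertex m t) (y : KochVertex m t) :
    Decidable ((KochGraph m (t+1)).Adj (Sum.inl x) (Sum.inl y)) :=
  (inferInstance : DecidableRel (KochGraph m (t+1)).Adj) (Sum.inl x) (Sum.inl y)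

instance kochDecEq_lr (m t : ℕ) (x : KochVertex m t) (y : KochTri m t × Fin 3 × Fin m × Fin 2) :
    Decidable (@Eq (KochVertex m (t+1)) (Sum.inl x) (Sum.inr y)) :=
  KochVertex.instDecidableEq m (t+1) (Sum.inl x) (Sum.inr y)

instance kochDecAdj_lr (m t : ℕ) (x : KochVertex m t) (y : KochTri m t × Fin 3 × Fin m × Fin 2) :
    Decidable ((KochGraph m (t+1)).Adj (Sum.inl x) (Sum.inr y)) :=
  (inferInstance : DecidableRel (KochGraph m (t+1)).Adj) (Sum.inl x) (Sum.inr y)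

instance kochDecEq_rl (m t : ℕ) (x : KochTri m t × Fin 3 × Fin m × Fin 2) (y : KochVertex m t) :
    Decidable (@Eq (KochVertex m (t+1)) (Sum.inr x) (Sum.inl y)) :=
  KochVertex.instDecidableEq m (t+1) (Sum.inr x) (Sum.inl y)

instance kochDecAdj_rl (m t : ℕ) (x : KochTri m t × Fin 3 × Fin m × Fin 2) (y : KochVertex m t) :
    Decidable ((KochGraph m (t+1)).Adj (Sum.inr x) (Sum.inl y)) :=
  (inferInstance : DecidableRel (KochGraph m (t+1)).Adj) (Sum.inr x) (Sum.inl y)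

instance kochDecEq_rr (m t : ℕ) (x : KochTri m t × Fin 3 × Fin m × Fin 2) (y : KochTri m t × Fin 3 × Fin m × Fin 2) :
    Decidable (@Eq (KochVertex m (t+1)) (Sum.inr x) (Sum.inr y)) :=
  KochVertex.instDecidableEq m (t+1) (Sum.inr x) (Sum.inr y)

instance kochDecAdj_rr (m t : ℕ) (x : KochTri m t × Fin 3 × Fin m × Fin 2) (y : KochTri m t × Fin 3 × Fin m × Fin 2) :
    Decidable ((KochGraph m (t+1)).Adj (Sum.inr x) (Sum.inr y)) :=
  (inferInstance : DecidableRel (KochGraph m (t+1)).Adj) (Sum.inr x) (Sum.inr y)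

open Finset

lemma kochCorner_inl (m t : ℕ) (τ : KochTri m t) (i : Fin 3) :
    KochCorner m (t+1) (Sum.inl τ) i = Sum.inl (KochCorner m t τ i) := rfl

lemma kochCorner_inr (m t : ℕ) (τ : KochTri m t) (c : Fin 3) (g : Fin m) (i : Fin 3) :
    KochCorner m (t+1) (Sum.inr (τ, c, g)) i =
      ![Sum.inl (KochCorner m t τ c), Sum.inr (τ, c, g, 0), Sum.inr (τ, c, g, 1)] i := rfl

lemma koch_adj_inl_inl (m t : ℕ) (u v : KochVertex m t) :
    (KochGraph m (t+1)).Adj (Sum.inl v) (Sum.inl u) ↔ (KochGraph m t).Adj v u := by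
  constructor
  · rintro ⟨hne, τ, i, j, hi, hj⟩
    refine ⟨fun h => hne (by rw [h]), ?_⟩
    cases τ with
    | inl σ => exact ⟨σ, i, j, Sum.inl.inj hi, Sum.inl.inj hj⟩
    | inr p =>
      obtain ⟨σ, c, g⟩ := p
      rw [kochCorner_inr] at hi hj
      fin_cases i <;> fin_cases j <;> simp_all
  · rintro ⟨hne, τ, i, j, hi, hj⟩
    exact ⟨fun h => hne (Sum.inl.inj h), Sum.inl τ, i, j, by rw [kochCorner_inl, hi],
      by rw [kochCorner_inl, hj]⟩

lemma koch_adj_inl_inr (m t : ℕ) (v : KochVertex m t) (τ : KochTri m t) (c : Fin 3)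
    (g : Fin m) (p : Fin 2) :
    (KochGraph m (t+1)).Adj (Sum.inl v) (Sum.inr (τ, c, g, p)) ↔ KochCorner m t τ c = v := by
  constructor
  · rintro ⟨hne, τ', i, j, hi, hj⟩
    cases τ' with
    | inl σ => fin_cases j <;> simp_all [kochCorner_inl]
    | inr q =>
      obtain ⟨σ, c', g'⟩ := q
      rw [kochCorner_inr] at hi hj
      fin_cases i <;> fin_cases j <;>
        first
        | (simp_all; done)
        | (simp at hi hj
           obtain ⟨rfl, rfl, rfl, rfl⟩ := hj
           exact Sum.inl.inj hi)
  · intro h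
    refine ⟨fun hh => by simpa using hh, Sum.inr (τ, c, g), 0, if p = 0 then 1 else 2, ?_, ?_⟩
    · rw [kochCorner_inr]; exact congrArg Sum.inl h
    · fin_cases p <;> simp [kochCorner_inr] <;> rfl

lemma koch_adj_inr_inr (m t : ℕ) (τ τ' : KochTri m t) (c c' : Fin 3) (g g' : Fin m)
    (p p' : Fin 2) :
    (KochGraph m (t+1)).Adj (Sum.inr (τ, c, g, p)) (Sum.inr (τ', c', g', p')) ↔
      τ = τ' ∧ c = c' ∧ g = g' ∧ p ≠ p' := by
  constructor
  · rintro ⟨hne, σ', i, j, hi, hj⟩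
    cases σ' with
    | inl σ => fin_cases i <;> simp_all [kochCorner_inl]
    | inr q =>
      obtain ⟨σ, c₀, g₀⟩ := q
      rw [kochCorner_inr] at hi hj
      fin_cases i <;> fin_cases j <;>
        first
        | (simp_all; done)
        | (simp at hi hj
           obtain ⟨rfl, rfl, rfl, rfl⟩ := hi
           obtain ⟨rfl, rfl, rfl, rfl⟩ := hj
           exact ⟨rfl, rfl, rfl, by decide⟩)
  · rintro ⟨rfl, rfl, rfl, hne⟩
    refine ⟨fun hh => hne (congrArg (fun q : KochTri m t × Fin 3 × Fin m × Fin 2 => q.2.2.2)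
      (Sum.inr.inj hh)), Sum.inr (τ, c, g), if p = 0 then 1 else 2,
      if p' = 0 then 1 else 2, ?_, ?_⟩
    · fin_cases p <;> simp [kochCorner_inr] <;> rfl
    · fin_cases p' <;> simp [kochCorner_inr] <;> rfl

lemma sum_vertex_split (m t : ℕ) (f : KochVertex m (t+1) → ℕ) :
    ∑ u : KochVertex m (t+1), f u = (∑ u : KochVertex m t, f (Sum.inl u)) +
      ∑ b : KochTri m t × Fin 3 × Fin m × Fin 2, f (Sum.inr b) :=
  Fintype.sum_sum_type f

lemma sum_tri_split (m t : ℕ) (f : KochTri m (t+1) → ℕ) :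
    ∑ τ : KochTri m (t+1), f τ = (∑ τ : KochTri m t, f (Sum.inl τ)) +
      ∑ q : KochTri m t × Fin 3 × Fin m, f (Sum.inr q) :=
  Fintype.sum_sum_type f

lemma kochCorner_inr0 (m t : ℕ) (τ : KochTri m t) (c : Fin 3) (g : Fin m) :
    KochCorner m (t+1) (Sum.inr (τ, c, g)) 0 = Sum.inl (KochCorner m t τ c) := rfl
lemma kochCorner_inr1 (m t : ℕ) (τ : KochTri m t) (c : Fin 3) (g : Fin m) :
    KochCorner m (t+1) (Sum.inr (τ, c, g)) 1 = Sum.inr (τ, c, g, 0) := rfl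
lemma kochCorner_inr2 (m t : ℕ) (τ : KochTri m t) (c : Fin 3) (g : Fin m) :
    KochCorner m (t+1) (Sum.inr (τ, c, g)) 2 = Sum.inr (τ, c, g, 1) := rfl

lemma kochCorner_zero (m : ℕ) (τ : KochTri m 0) (i : Fin 3) : KochCorner m 0 τ i = i := rfl

lemma inl_eq_inl_iff (m t : ℕ) (u v : KochVertex m t) :
    (Sum.inl u : KochVertex m (t+1)) = Sum.inl v ↔ u = v :=
  ⟨Sum.inl.inj, congrArg _⟩

lemma inr_eq_inr_iff (m t : ℕ) (b b' : KochTri m t × Fin 3 × Fin m × Fin 2) :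
    (Sum.inr b : KochVertex m (t+1)) = Sum.inr b' ↔ b = b' :=
  ⟨Sum.inr.inj, congrArg _⟩

/-- The number of (triangle, corner-index) pairs at which `v` sits. -/
def kochT (m t : ℕ) (v : KochVertex m t) : ℕ :=
  ∑ p : KochTri m t × Fin 3, if KochCorner m t p.1 p.2 = v then 1 else 0


lemma sum_triple_aux (m t : ℕ) (F : KochTri m t → Fin 3 → ℕ) :
    (∑ q : KochTri m t × Fin 3 × Fin m, F q.1 q.2.1) =
      m * ∑ p : KochTri m t × Fin 3, F p.1 p.2 :=
  calc (∑ q : KochTri m t × Fin 3 × Fin m, F q.1 q.2.1)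
      = ∑ τ : KochTri m t, ∑ y : Fin 3 × Fin m, F τ y.1 := Fintype.sum_prod_type _
    _ = ∑ τ : KochTri m t, ∑ c : Fin 3, ∑ _g : Fin m, F τ c :=
        Finset.sum_congr rfl fun τ _ => Fintype.sum_prod_type _
    _ = ∑ τ : KochTri m t, ∑ c : Fin 3, m * F τ c := by
        refine Finset.sum_congr rfl fun τ _ => Finset.sum_congr rfl fun c _ => ?_
        rw [Finset.sum_const, Finset.card_univ, Fintype.card_fin, smul_eq_mul]
    _ = m * ∑ p : KochTri m t × Fin 3, F p.1 p.2 := by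
        rw [Fintype.sum_prod_type, Finset.mul_sum]
        exact Finset.sum_congr rfl fun τ _ => (Finset.mul_sum _ _ _).symm

lemma sum_quad_aux (m t : ℕ) (F : KochTri m t → Fin 3 → ℕ) :
    (∑ b : KochTri m t × Fin 3 × Fin m × Fin 2, F b.1 b.2.1) =
      2 * m * ∑ p : KochTri m t × Fin 3, F p.1 p.2 :=
  calc (∑ b : KochTri m t × Fin 3 × Fin m × Fin 2, F b.1 b.2.1)
      = ∑ τ : KochTri m t, ∑ y : Fin 3 × Fin m × Fin 2, F τ y.1 := Fintype.sum_prod_type _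
    _ = ∑ τ : KochTri m t, ∑ c : Fin 3, ∑ _z : Fin m × Fin 2, F τ c :=
        Finset.sum_congr rfl fun τ _ => Fintype.sum_prod_type _
    _ = ∑ τ : KochTri m t, ∑ c : Fin 3, 2 * m * F τ c := by
        refine Finset.sum_congr rfl fun τ _ => Finset.sum_congr rfl fun c _ => ?_
        rw [Finset.sum_const, Finset.card_univ]
        show (Fintype.card (Fin m × Fin 2)) • F τ c = _
        rw [Fintype.card_prod, Fintype.card_fin, Fintype.card_fin, smul_eq_mul]
        ring
    _ = 2 * m * ∑ p : KochTri m t × Fin 3, F p.1 p.2 := by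
        rw [Fintype.sum_prod_type, Finset.mul_sum]
        exact Finset.sum_congr rfl fun τ _ => (Finset.mul_sum _ _ _).symm

lemma degree_eq_sum {V : Type*} [Fintype V] [DecidableEq V] (G : SimpleGraph V)
    [DecidableRel G.Adj] (v : V) :
    G.degree v = ∑ u, if G.Adj v u then 1 else 0 := by
  show (G.neighborFinset v).card = _
  rw [SimpleGraph.neighborFinset_eq_filter, Finset.card_filter]

lemma kochT_inl (m t : ℕ) (v : KochVertex m t) :
    kochT m (t+1) (Sum.inl v) = (m+1) * kochT m t v := by
  unfold kochT
  rw [Fintype.sum_prod_type, sum_tri_split]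
  have h1 : (∑ τ : KochTri m t, ∑ i : Fin 3,
      if KochCorner m (t+1) (Sum.inl τ) i = Sum.inl v then (1:ℕ) else 0) =
      ∑ p : KochTri m t × Fin 3, if KochCorner m t p.1 p.2 = v then 1 else 0 := by
    rw [Fintype.sum_prod_type]
    exact Finset.sum_congr rfl fun τ _ => Finset.sum_congr rfl fun i _ => by
      rw [kochCorner_inl]; exact if_congr (inl_eq_inl_iff m t _ v) rfl rfl
  have h2 : (∑ q : KochTri m t × Fin 3 × Fin m, ∑ i : Fin 3,
      if KochCorner m (t+1) (Sum.inr q) i = Sum.inl v then (1:ℕ) else 0) =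
      m * ∑ p : KochTri m t × Fin 3, if KochCorner m t p.1 p.2 = v then 1 else 0 := by
    have hq : ∀ q : KochTri m t × Fin 3 × Fin m, (∑ i : Fin 3,
        if KochCorner m (t+1) (Sum.inr q) i = Sum.inl v then (1:ℕ) else 0) =
        if KochCorner m t q.1 q.2.1 = v then 1 else 0 := by
      rintro ⟨τ, c, g⟩
      show (∑ i : Fin 3,
        if KochCorner m (t+1) (Sum.inr (τ, c, g)) i = Sum.inl v then (1:ℕ) else 0) =
        if KochCorner m t τ c = v then 1 else 0
      erw [Fin.sum_univ_three, kochCorner_inr0, kochCorner_inr1, kochCorner_inr2,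
        if_congr (inl_eq_inl_iff m t _ v) rfl rfl,
        if_neg Sum.inr_ne_inl,
        add_zero, add_zero]
    rw [Finset.sum_congr rfl fun q _ => hq q,
      sum_triple_aux m t fun τ c => if KochCorner m t τ c = v then 1 else 0]
  rw [h1, h2]
  ring

lemma kochT_inr (m t : ℕ) (τ : KochTri m t) (c : Fin 3) (g : Fin m) (p : Fin 2) :
    kochT m (t+1) (Sum.inr (τ, c, g, p)) = 1 := by
  unfold kochT
  rw [Fintype.sum_prod_type, sum_tri_split]
  have h1 : (∑ σ : KochTri m t, ∑ i : Fin 3,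
      if KochCorner m (t+1) (Sum.inl σ) i = Sum.inr (τ, c, g, p) then (1:ℕ) else 0) = 0 :=
    Finset.sum_eq_zero fun σ _ => Finset.sum_eq_zero fun i _ => by
      erw [kochCorner_inl, if_neg (fun hh => Sum.inl_ne_inr hh)]
  have h2 : (∑ q : KochTri m t × Fin 3 × Fin m, ∑ i : Fin 3,
      if KochCorner m (t+1) (Sum.inr q) i = Sum.inr (τ, c, g, p) then (1:ℕ) else 0) = 1 := by
    have hq : ∀ q : KochTri m t × Fin 3 × Fin m, (∑ i : Fin 3,
        if KochCorner m (t+1) (Sum.inr q) i = Sum.inr (τ, c, g, p) then (1:ℕ) else 0) =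
        (if q = (τ, c, g) ∧ (0:Fin 2) = p then 1 else 0) +
        (if q = (τ, c, g) ∧ (1:Fin 2) = p then 1 else 0) := by
      rintro ⟨σ, c', g'⟩
      erw [Fin.sum_univ_three, kochCorner_inr0, kochCorner_inr1, kochCorner_inr2,
        if_neg (fun hh => Sum.inl_ne_inr hh), zero_add,
        if_congr (inr_eq_inr_iff m t _ _) rfl rfl, if_congr (inr_eq_inr_iff m t _ _) rfl rfl]
      congr 1 <;> refine if_congr ?_ rfl rfl <;>
        simp [Prod.ext_iff, and_assoc]
    rw [Finset.sum_congr rfl fun q _ => hq q, Finset.sum_add_distrib]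
    simp only [ite_and, Finset.sum_ite_eq', Finset.mem_univ, if_true]
    fin_cases p <;> decide
  rw [h1, h2]

lemma koch_degree_inl (m t : ℕ) (v : KochVertex m t) :
    (KochGraph m (t+1)).degree (Sum.inl v) =
      (KochGraph m t).degree v + 2 * m * kochT m t v := by
  erw [degree_eq_sum, degree_eq_sum, sum_vertex_split]
  congr 1
  · exact Finset.sum_congr rfl fun u _ => if_congr (koch_adj_inl_inl m t u v) rfl rfl
  · have hb : ∀ b : KochTri m t × Fin 3 × Fin m × Fin 2,
        (if (KochGraph m (t+1)).Adj (Sum.inl v) (Sum.inr b) then (1:ℕ) else 0) =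
        if KochCorner m t b.1 b.2.1 = v then 1 else 0 := by
      rintro ⟨τ, c, g, p⟩
      exact if_congr (koch_adj_inl_inr m t v τ c g p) rfl rfl
    rw [Finset.sum_congr rfl fun b _ => hb b,
      sum_quad_aux m t fun τ c => if KochCorner m t τ c = v then 1 else 0]
    rfl

lemma koch_degree_inr (m t : ℕ) (τ : KochTri m t) (c : Fin 3) (g : Fin m) (p : Fin 2) :
    (KochGraph m (t+1)).degree (Sum.inr (τ, c, g, p)) = 2 := by
  erw [degree_eq_sum, sum_vertex_split]
  have h1 : (∑ u : KochVertex m t,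
      if (KochGraph m (t+1)).Adj (Sum.inr (τ, c, g, p)) (Sum.inl u) then (1:ℕ) else 0) = 1 := by
    have hiff : ∀ u : KochVertex m t,
        (KochGraph m (t+1)).Adj (Sum.inr (τ, c, g, p)) (Sum.inl u) ↔ KochCorner m t τ c = u :=
      fun u => ⟨fun h => (koch_adj_inl_inr m t u τ c g p).1 h.symm,
                fun h => ((koch_adj_inl_inr m t u τ c g p).2 h).symm⟩
    rw [Finset.sum_congr rfl fun u _ => if_congr (hiff u) rfl rfl]
    simp
  have h2 : (∑ b' : KochTri m t × Fin 3 × Fin m × Fin 2,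
      if (KochGraph m (t+1)).Adj (Sum.inr (τ, c, g, p)) (Sum.inr b') then (1:ℕ) else 0) = 1 := by
    have hiff : ∀ b' : KochTri m t × Fin 3 × Fin m × Fin 2,
        (KochGraph m (t+1)).Adj (Sum.inr (τ, c, g, p)) (Sum.inr b') ↔
        b' = (τ, c, g, if p = 0 then 1 else 0) := by
      rintro ⟨τ', c', g', p'⟩
      rw [koch_adj_inr_inr]
      constructor
      · rintro ⟨rfl, rfl, rfl, h⟩
        fin_cases p <;> fin_cases p' <;> simp_all
      · rintro h
        injection h with h1 h2
        injection h2 with h2 h3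
        injection h3 with h3 h4
        refine ⟨h1.symm, h2.symm, h3.symm, ?_⟩
        subst h4
        fin_cases p <;> decide
    rw [Finset.sum_congr rfl fun b' _ => if_congr (hiff b') rfl rfl]
    simp
  rw [h1, h2]

lemma koch_degree_eq (m : ℕ) : ∀ t (v : KochVertex m t),
    (KochGraph m t).degree v = 2 * kochT m t v := by
  intro t
  induction t with
  | zero =>
    intro v
    have hT : kochT m 0 v = 1 := by
      unfold kochT
      rw [Fintype.sum_prod_type]
      rw [Finset.sum_congr rfl fun (τ : KochTri m 0) _ => Finset.sum_congr rfl fun i _ =>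
        (by rw [kochCorner_zero]; rfl : (if KochCorner m 0 τ i = v then (1:ℕ) else 0) =
          if i = v then 1 else 0)]
      simp only [Finset.sum_ite_eq', Finset.mem_univ, if_true, Finset.sum_const,
        Finset.card_univ, smul_eq_mul, mul_one]
      have hs := Finset.sum_ite_eq' Finset.univ (v : Fin 3) fun _ => (1:ℕ)
      rw [if_pos (Finset.mem_univ _)] at hs
      exact (congrArg₂ (· * ·) Fintype.card_unit hs).trans rfl
    have hadj : ∀ u : KochVertex m 0, (KochGraph m 0).Adj v u ↔ v ≠ u :=
      fun u => ⟨fun h => h.1, fun h => ⟨h, (), v, u, rfl, rfl⟩⟩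
    rw [degree_eq_sum, hT]
    have hcard : Fintype.card (KochVertex m 0) = 3 := Fintype.card_fin 3
    have hone : (∑ u : KochVertex m 0, if v = u then (1:ℕ) else 0) = 1 := by simp
    have hsplit : ((∑ u : KochVertex m 0, if v = u then (1:ℕ) else 0) +
        ∑ u : KochVertex m 0, if (KochGraph m 0).Adj v u then (1:ℕ) else 0) = 3 := by
      rw [← Finset.sum_add_distrib]
      have hterm : ∀ u : KochVertex m 0,
          ((if v = u then (1:ℕ) else 0) + if (KochGraph m 0).Adj v u then 1 else 0) = 1 := by
        intro u
        by_cases h : v = u <;> simp [h, hadj]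
      rw [Finset.sum_congr rfl fun u _ => hterm u, Finset.sum_const, Finset.card_univ, hcard,
        smul_eq_mul, mul_one]
    omega
  | succ t ih =>
    intro v
    cases v with
    | inl w => rw [koch_degree_inl, ih w, kochT_inl]; ring
    | inr b =>
      obtain ⟨τ, c, g, p⟩ := b
      rw [koch_degree_inr, kochT_inr]
/-- For all integers m ≥ 1 and t ≥ 1, every vertex of `K_{m,t-1}` has degree in
`K_{m,t}` equal to `(m+1)` times its degree in `K_{m,t-1}`. (Here the step `t ≥ 1` is written
as `t+1`.) -/
theorem koch_degree_growth (m t : ℕ) (hm : 1 ≤ m) (v : KochVertex m t) :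
    (KochGraph m (t + 1)).degree (KochInl m t v) = (m + 1) * (KochGraph m t).degree v := by
  have hinl : KochInl m t v = Sum.inl v := rfl
  rw [hinl, koch_degree_inl, koch_degree_eq m t v]
  ring
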